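/- For every integer $k \geq 1$ one has $p(W_{k+1}) = \sum_{j=0}^{k} \frac{(-1)^j B_j}{j!}\,\ell^j\, p(t_{k+1-j}) \; - \; \frac{1}{k!}\,\ell^k$ in $S$. (This is the algebraic core of Proposition 1.1: $\mathrm{ch}_k(H_x) = \sum_{j=0}^{k} \frac{(-1)^j B_j}{j!} c_1(L_x)^j\, {\pi_x}_*\mathrm{ev}_x^*(\mathrm{ch}_{k+1-j}(X)) - \frac{1}{k!} c_1(L_x)^k$.) -/

import Mathlib

lemma factinv {j m : ℕ} (h : j ≤ m) :
    ((j.factorial:ℚ))⁻¹ * (((m-j).factorial:ℚ))⁻¹ = (m.choose j) / m.factorial := by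
  have h1 : (j.factorial:ℚ) ≠ 0 := Nat.cast_ne_zero.mpr j.factorial_ne_zero
  have h2 : ((m-j).factorial:ℚ) ≠ 0 := Nat.cast_ne_zero.mpr (m-j).factorial_ne_zero
  have h3 : (m.factorial:ℚ) ≠ 0 := Nat.cast_ne_zero.mpr m.factorial_ne_zero
  rw [Nat.cast_choose ℚ h]
  field_simp

lemma altfact (m : ℕ) (hm : 1 ≤ m) :
    ∑ i ∈ Finset.range m, ((-1:ℚ)^(m-i)/(m-i).factorial) * ((i.factorial:ℚ))⁻¹
      = -1/m.factorial := by
  have key : ∑ i ∈ Finset.range (m+1), (-1:ℚ)^(m-i) * m.choose i = 0 := by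
    have h := add_pow (1:ℚ) (-1) m
    simp only [one_pow, one_mul, add_neg_cancel] at h
    rw [zero_pow (by omega)] at h
    exact h.symm
  have h2 : ∑ i ∈ Finset.range m, (-1:ℚ)^(m-i) * m.choose i = -1 := by
    have := Finset.sum_range_succ (fun i => (-1:ℚ)^(m-i) * m.choose i) m
    rw [key] at this
    simp at this
    linarith
  calc ∑ i ∈ Finset.range m, ((-1:ℚ)^(m-i)/(m-i).factorial) * ((i.factorial:ℚ))⁻¹
      = ∑ i ∈ Finset.range m, ((-1:ℚ)^(m-i) * m.choose i) / m.factorial := by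
        refine Finset.sum_congr rfl fun i hi => ?_
        have hle : i ≤ m := by have := Finset.mem_range.mp hi; omega
        calc ((-1:ℚ)^(m-i)/(m-i).factorial) * ((i.factorial:ℚ))⁻¹
            = (-1:ℚ)^(m-i) * (((i.factorial:ℚ))⁻¹ * (((m-i).factorial:ℚ))⁻¹) := by ring
          _ = (-1:ℚ)^(m-i) * ((m.choose i) / m.factorial) := by rw [factinv hle]
          _ = ((-1:ℚ)^(m-i) * m.choose i) / m.factorial := by ring
    _ = -1 / m.factorial := by rw [← Finset.sum_div, h2]

lemma bern1 (k : ℕ) :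
    ∑ j ∈ Finset.range (k+1), ((-1:ℚ)^j * bernoulli j / j.factorial) * (((k+1-j).factorial:ℚ))⁻¹
      = (k.factorial:ℚ)⁻¹ := by
  have hsb := sum_bernoulli' (k+1)
  calc ∑ j ∈ Finset.range (k+1), ((-1:ℚ)^j * bernoulli j / j.factorial) * (((k+1-j).factorial:ℚ))⁻¹
      = ∑ j ∈ Finset.range (k+1), (((k+1).choose j : ℚ) * bernoulli' j) / (k+1).factorial := by
        refine Finset.sum_congr rfl fun j hj => ?_
        have hle : j ≤ k+1 := by have := Finset.mem_range.mp hj; omega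
        rw [bernoulli'_eq_bernoulli]
        calc ((-1:ℚ)^j * bernoulli j / j.factorial) * (((k+1-j).factorial:ℚ))⁻¹
            = ((-1:ℚ)^j * bernoulli j) * (((j.factorial:ℚ))⁻¹ * (((k+1-j).factorial:ℚ))⁻¹) := by ring
          _ = ((-1:ℚ)^j * bernoulli j) * (((k+1).choose j) / (k+1).factorial) := by rw [factinv hle]
          _ = (((k+1).choose j : ℚ) * ((-1)^j * bernoulli j)) / (k+1).factorial := by ring
    _ = ((k+1 : ℚ)) / (k+1).factorial := by rw [← Finset.sum_div, hsb]; norm_num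
    _ = (k.factorial:ℚ)⁻¹ := by
        rw [Nat.factorial_succ]
        have h1 : (k.factorial:ℚ) ≠ 0 := Nat.cast_ne_zero.mpr k.factorial_ne_zero
        have h2 : ((k:ℚ)+1) ≠ 0 := by positivity
        push_cast
        field_simp

lemma bern2 (k : ℕ) (hk : 1 ≤ k) :
    ∑ j ∈ Finset.range (k+1), ((-1:ℚ)^j * bernoulli j / j.factorial) *
      ((-1:ℚ)^(k+1-j) * (((k+1-j).factorial:ℚ))⁻¹) = 0 := by
  have hsb := sum_bernoulli (k+1)
  rw [if_neg (by omega)] at hsb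
  calc ∑ j ∈ Finset.range (k+1), ((-1:ℚ)^j * bernoulli j / j.factorial) *
        ((-1:ℚ)^(k+1-j) * (((k+1-j).factorial:ℚ))⁻¹)
      = ∑ j ∈ Finset.range (k+1), ((-1:ℚ)^(k+1)) * ((((k+1).choose j : ℚ) * bernoulli j) / (k+1).factorial) := by
        refine Finset.sum_congr rfl fun j hj => ?_
        have hle : j ≤ k+1 := by have := Finset.mem_range.mp hj; omega
        have hsgn : (-1:ℚ)^j * (-1:ℚ)^(k+1-j) = (-1:ℚ)^(k+1) := by
          rw [← pow_add]
          congr 1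
          omega
        calc ((-1:ℚ)^j * bernoulli j / j.factorial) * ((-1:ℚ)^(k+1-j) * (((k+1-j).factorial:ℚ))⁻¹)
            = ((-1:ℚ)^j * (-1:ℚ)^(k+1-j)) * (bernoulli j * (((j.factorial:ℚ))⁻¹ * (((k+1-j).factorial:ℚ))⁻¹)) := by ring
          _ = ((-1:ℚ)^(k+1)) * (bernoulli j * (((k+1).choose j) / (k+1).factorial)) := by rw [hsgn, factinv hle]
          _ = ((-1:ℚ)^(k+1)) * ((((k+1).choose j : ℚ) * bernoulli j) / (k+1).factorial) := by ring
    _ = 0 := by rw [← Finset.mul_sum, ← Finset.sum_div, hsb]; simp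

lemma bern3 (k : ℕ) (hk : 1 ≤ k) (n : ℚ) :
    ∑ j ∈ Finset.range (k+1), ((-1:ℚ)^j * bernoulli j / j.factorial) *
      ((n*(-1)^(k+1-j) + 1)/((k+1-j).factorial)) = (k.factorial:ℚ)⁻¹ := by
  have e : ∀ j ∈ Finset.range (k+1),
      ((-1:ℚ)^j * bernoulli j / j.factorial) * ((n*(-1)^(k+1-j) + 1)/((k+1-j).factorial))
      = n * (((-1:ℚ)^j * bernoulli j / j.factorial) * ((-1:ℚ)^(k+1-j) * (((k+1-j).factorial:ℚ))⁻¹))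
        + ((-1:ℚ)^j * bernoulli j / j.factorial) * (((k+1-j).factorial:ℚ))⁻¹ := by
    intro j hj
    field_simp
  rw [Finset.sum_congr rfl e, Finset.sum_add_distrib, ← Finset.mul_sum, bern2 k hk, bern1 k]
  ring

/-- Algebraic core of Proposition 1.1:
`p (W (k+1)) = ∑_{j=0}^{k} ((-1)^j B_j / j!) ℓ^j p (t (k+1-j)) - (1/k!) ℓ^k`. -/
theorem stmt_0 {R S : Type*} [CommRing R] [Algebra ℚ R] [CommRing S] [Algebra ℚ S]
    (σ L : R) (hσ : σ ^ 2 = -(σ * L))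
    (n : ℕ) (t : ℕ → R) (ht0 : t 0 = (n : R)) (ht : ∀ j, 1 ≤ j → σ * t j = 0)
    (π : S →+* R) (ℓ : S) (hL : L = π ℓ)
    (p : R →+ S)
    (hproj : ∀ (a : S) (x : R), p (π a * x) = a * p x)
    (hpπ : ∀ a : S, p (π a) = 0) (hpσ : p σ = 1)
    (c : R) (hc : c = 2 * σ + L)
    (Z : ℕ → R)
    (hZ : ∀ k : ℕ, Z k = ∑ j ∈ Finset.range (k + 1),
      (((-1 : ℚ) ^ (k - j) / (k - j).factorial) •
        ((t j - ((j.factorial : ℚ)⁻¹ • c ^ j)) * σ ^ (k - j))))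
    (W : ℕ → R)
    (hW : ∀ m : ℕ, W m = ∑ j ∈ Finset.range (m + 1),
      (((-1 : ℚ) ^ j * bernoulli j / j.factorial) • (Z (m - j) * c ^ j)))
    (k : ℕ) (hk : 1 ≤ k) :
    p (W (k + 1)) =
      (∑ j ∈ Finset.range (k + 1),
        ((-1 : ℚ) ^ j * bernoulli j / j.factorial) • (ℓ ^ j * p (t (k + 1 - j))))
      - ((k.factorial : ℚ)⁻¹ • ℓ ^ k) := by
  -- basic ring facts
  have hσc : σ * c = σ^2 := by rw [hc]; linear_combination hσ
  have hc2 : c^2 = L^2 := by rw [hc]; linear_combination 4*hσ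
  have hσsucc : ∀ m : ℕ, σ^(m+2) = π (-ℓ) * σ^(m+1) := by
    intro m
    rw [map_neg, ← hL]
    linear_combination σ^m * hσ
  have hpσpow : ∀ m : ℕ, p (σ^(m+1)) = (-ℓ)^m := by
    intro m; induction m with
    | zero => simpa using hpσ
    | succ m ih =>
      rw [hσsucc m, hproj, ih]
      ring
  have hσcpow : ∀ a j : ℕ, σ^(a+1) * c^j = σ^(a+1+j) := by
    intro a j; induction j with
    | zero => simp
    | succ j ih =>
      calc σ^(a+1) * c^(j+1) = (σ^(a+1) * c^j) * c := by ring
        _ = σ^(a+1+j) * c := by rw [ih]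
        _ = σ^(a+j) * (σ * c) := by ring
        _ = σ^(a+j) * σ^2 := by rw [hσc]
        _ = σ^(a+1+(j+1)) := by ring
  have hLpow : ∀ j : ℕ, L^j = π (ℓ^j) := by intro j; rw [hL, map_pow]
  have hceven : ∀ i : ℕ, c^(2*i) = L^(2*i) := by
    intro i; induction i with
    | zero => simp
    | succ i ih =>
      calc c^(2*(i+1)) = c^(2*i) * c^2 := by ring
        _ = L^(2*i) * L^2 := by rw [ih, hc2]
        _ = L^(2*(i+1)) := by ring
  have hpc : p c = 2 := by
    have h1 : c = π 2 * σ + π ℓ := by rw [hc, hL, map_ofNat]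
    rw [h1, map_add, hproj, hpπ, hpσ]
    ring
  have hpc_even : ∀ i : ℕ, p (c^(2*i)) = 0 := by
    intro i; rw [hceven, hLpow]; exact hpπ _
  have hpc_odd : ∀ i : ℕ, p (c^(2*i+1)) = 2 * ℓ^(2*i) := by
    intro i
    have h1 : c^(2*i+1) = π (ℓ^(2*i)) * c := by
      rw [← hLpow, ← hceven]; ring
    rw [h1, hproj, hpc]
    ring
  have htσ : ∀ m e : ℕ, 1 ≤ m → t m * σ^(e+1) = 0 := by
    intro m e hm
    calc t m * σ^(e+1) = (σ * t m) * σ^e := by ring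
      _ = 0 := by rw [ht m hm, zero_mul]
  have hcL : ∀ j : ℕ, ∃ r : R, c^j = L^j + σ * r := by
    intro j; induction j with
    | zero => exact ⟨0, by simp⟩
    | succ j ih =>
      obtain ⟨r, hr⟩ := ih
      refine ⟨2*L^j + r*c, ?_⟩
      calc c^(j+1) = (L^j + σ*r) * c := by rw [← hr]; ring
        _ = L^j * (2*σ + L) + σ*(r*c) := by rw [← hc]; ring
        _ = L^(j+1) + σ * (2*L^j + r*c) := by ring
  have htc : ∀ m j : ℕ, 1 ≤ m → t m * c^j = π (ℓ^j) * t m := by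
    intro m j hm
    obtain ⟨r, hr⟩ := hcL j
    calc t m * c^j = t m * L^j + (σ * t m) * r := by rw [hr]; ring
      _ = t m * L^j := by rw [ht m hm]; ring
      _ = π (ℓ^j) * t m := by rw [hLpow]; ring
  -- simplification of Z m for m ≥ 1
  have hZm : ∀ m : ℕ, 1 ≤ m → Z m = t m - (m.factorial:ℚ)⁻¹ • c^m
      + (((n:ℚ)*(-1)^m + 1)/m.factorial) • σ^m := by
    intro m hm
    rw [hZ m, Finset.sum_range_succ]
    have hlast : (((-1:ℚ))^(m-m)/(m-m).factorial) •
        ((t m - ((m.factorial:ℚ)⁻¹) • c^m) * σ^(m-m)) = t m - (m.factorial:ℚ)⁻¹ • c^m := by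
      simp
    rw [hlast]
    have hsum : ∀ i ∈ Finset.range m,
        (((-1:ℚ))^(m-i)/(m-i).factorial) • ((t i - ((i.factorial:ℚ)⁻¹) • c^i) * σ^(m-i))
        = (((-1:ℚ)^(m-i)/(m-i).factorial) * (if i = 0 then (n:ℚ) else 0)
            - ((-1:ℚ)^(m-i)/(m-i).factorial) * ((i.factorial:ℚ))⁻¹) • σ^m := by
      intro i hi
      have him : i < m := Finset.mem_range.mp hi
      have h1 : c^i * σ^(m-i) = σ^m := by
        have h2 := hσcpow (m-i-1) i
        have e1 : m - i - 1 + 1 = m - i := by omega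
        rw [e1] at h2
        have e2' : m - i + i = m := by omega
        rw [e2'] at h2
        rw [mul_comm]; exact h2
      have h4 : t i * σ^(m-i) = (if i = 0 then (n:ℚ) else 0) • σ^m := by
        rcases Nat.eq_zero_or_pos i with rfl | hipos
        · rw [if_pos rfl, ht0, Nat.sub_zero, Nat.cast_smul_eq_nsmul, nsmul_eq_mul]
        · have e3 : m - i = (m-i-1)+1 := by omega
          rw [e3, if_neg (by omega), zero_smul]
          exact htσ i (m-i-1) hipos
      calc (((-1:ℚ))^(m-i)/(m-i).factorial) • ((t i - ((i.factorial:ℚ)⁻¹) • c^i) * σ^(m-i))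
          = (((-1:ℚ))^(m-i)/(m-i).factorial) •
              (t i * σ^(m-i) - (i.factorial:ℚ)⁻¹ • (c^i * σ^(m-i))) := by
            rw [sub_mul, smul_mul_assoc]
        _ = (((-1:ℚ))^(m-i)/(m-i).factorial) •
              ((if i = 0 then (n:ℚ) else 0) • σ^m - (i.factorial:ℚ)⁻¹ • σ^m) := by
            rw [h4, h1]
        _ = _ := by
            rw [smul_sub, smul_smul, smul_smul, ← sub_smul]
    rw [Finset.sum_congr rfl hsum, ← Finset.sum_smul]
    have hcoef : ∑ i ∈ Finset.range m,
        (((-1:ℚ)^(m-i)/(m-i).factorial) * (if i = 0 then (n:ℚ) else 0)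
          - ((-1:ℚ)^(m-i)/(m-i).factorial) * ((i.factorial:ℚ))⁻¹)
        = ((n:ℚ)*(-1)^m + 1)/m.factorial := by
      rw [Finset.sum_sub_distrib, altfact m hm]
      have hite : ∑ i ∈ Finset.range m,
          ((-1:ℚ)^(m-i)/(m-i).factorial) * (if i = 0 then (n:ℚ) else 0)
          = (n:ℚ) * ((-1:ℚ)^m/m.factorial) := by
        rw [Finset.sum_eq_single_of_mem 0 (Finset.mem_range.mpr (by omega))
          (fun i _ hne => by rw [if_neg hne, mul_zero])]
        simp [mul_comm]
      rw [hite]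
      have hf : (m.factorial:ℚ) ≠ 0 := Nat.cast_ne_zero.mpr m.factorial_ne_zero
      field_simp
      ring
    rw [hcoef]
    exact add_comm _ _
  -- the key term computation
  have hterm : ∀ m j : ℕ, 1 ≤ m → m + j = k+1 →
      p (Z m * c^j) = ℓ^j * p (t m) - ((m.factorial:ℚ))⁻¹ • p (c^(k+1))
        + (((n:ℚ)*(-1)^m + 1)/(m.factorial)) • (-ℓ)^k := by
    intro m j hm hmj
    have hσm : σ^m * c^j = σ^(k+1) := by
      have h := hσcpow (m-1) j
      have e1 : m - 1 + 1 = m := by omega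
      rw [e1] at h
      have e2 : m + j = k + 1 := hmj
      rw [e2] at h
      exact h
    have h1 : Z m * c^j
        = π (ℓ^j) * t m - (m.factorial:ℚ)⁻¹ • c^(k+1)
          + (((n:ℚ)*(-1)^m + 1)/m.factorial) • σ^(k+1) := by
      rw [hZm m hm, add_mul, sub_mul, smul_mul_assoc, smul_mul_assoc, htc m j hm,
        ← pow_add, hmj, hσm]
    rw [h1, map_add, map_sub, map_rat_smul, map_rat_smul, hproj, hpσpow k]
  -- expand W (k+1) and push p through
  rw [hW (k+1), Finset.sum_range_succ, map_add, map_sum]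
  have hptj : ∀ j ∈ Finset.range (k+1),
      p (((-1:ℚ)^j * bernoulli j / j.factorial) • (Z (k+1-j) * c^j))
      = ((-1:ℚ)^j * bernoulli j / j.factorial) • (ℓ^j * p (t (k+1-j)))
        - (((-1:ℚ)^j * bernoulli j / j.factorial) * (((k+1-j).factorial:ℚ))⁻¹) • p (c^(k+1))
        + (((-1:ℚ)^j * bernoulli j / j.factorial) *
            (((n:ℚ)*(-1)^(k+1-j) + 1)/((k+1-j).factorial))) • (-ℓ)^k := by
    intro j hj
    have hjk : j < k + 1 := Finset.mem_range.mp hj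
    rw [map_rat_smul, hterm (k+1-j) j (by omega) (by omega),
      smul_add, smul_sub, smul_smul, smul_smul]
  rw [Finset.sum_congr rfl hptj]
  rw [Finset.sum_add_distrib, Finset.sum_sub_distrib, ← Finset.sum_smul, ← Finset.sum_smul,
    bern1 k, bern3 k hk (n:ℚ)]
  -- the last term j = k+1
  have hZ0 : Z 0 = (n:R) - 1 := by
    rw [hZ 0]
    simp [ht0]
  have hlast : p (((-1:ℚ)^(k+1) * bernoulli (k+1) / (k+1).factorial) •
      (Z (k+1-(k+1)) * c^(k+1)))
      = ((-1:ℚ)^(k+1) * bernoulli (k+1) / (k+1).factorial) • (((n:S) - 1) * p (c^(k+1))) := by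
    rw [Nat.sub_self, map_rat_smul, hZ0]
    congr 1
    have h5 : ((n:R) - 1) * c^(k+1) = π ((n:S) - 1) * c^(k+1) := by
      rw [map_sub, map_natCast, map_one]
    rw [h5, hproj]
  rw [hlast]
  -- case split on parity of k
  rcases Nat.even_or_odd k with ⟨i, hi⟩ | ⟨i, hi⟩
  · -- k even, k = i + i, so k + 1 = 2*i + 1 odd
    have hk2 : 2 ≤ k := by omega
    have hpck : p (c^(k+1)) = 2 * ℓ^k := by
      have : k + 1 = 2*i + 1 := by omega
      rw [this, hpc_odd i]
      congr 2
      omega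
    have hneg : (-ℓ)^k = ℓ^k := Even.neg_pow ⟨i, hi⟩ ℓ
    have hbz : bernoulli (k+1) = 0 := by
      rw [bernoulli_eq_bernoulli'_of_ne_one (by omega)]
      exact bernoulli'_eq_zero_of_odd ⟨i, by omega⟩ (by omega)
    rw [hpck, hneg, hbz, mul_zero, zero_div, zero_smul, add_zero]
    simp only [Algebra.smul_def]
    ring
  · -- k odd, k + 1 = 2*(i+1) even
    have hpck : p (c^(k+1)) = 0 := by
      have h6 : k + 1 = 2*(i+1) := by omega
      rw [h6, hpc_even]
    have hneg : (-ℓ)^k = -(ℓ^k) := Odd.neg_pow ⟨i, hi⟩ ℓ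
    rw [hpck, hneg]
    simp only [Algebra.smul_def]
    ring
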